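/- The dual of the MaxCut SDP, namely min{ ⟨𝟙, y⟩ : Diag(y) − C ⪰ 0, y ∈ ℝⁿ }, has a unique optimal solution for every symmetric matrix C ∈ Sym(n). -/

import Mathlib

open Matrix

namespace MaxCutAux
variable {n : ℕ}

lemma posSemidef_of_forall {M : Matrix (Fin n) (Fin n) ℝ} (hM : M.IsHermitian)
    (h : ∀ x : Fin n → ℝ, 0 ≤ x ⬝ᵥ M *ᵥ x) : M.PosSemidef :=
  posSemidef_iff_dotProduct_mulVec.mpr ⟨hM, fun x => by simpa using h x⟩

lemma dot_nonneg {M : Matrix (Fin n) (Fin n) ℝ} (hM : M.PosSemidef) (x : Fin n → ℝ) :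
    0 ≤ x ⬝ᵥ M *ᵥ x := by simpa using hM.dotProduct_mulVec_nonneg x

lemma exists_mulVec_single {S : Matrix (Fin n) (Fin n) ℝ} (hS : S.IsSymm) (i : Fin n)
    (h : ∀ x, S *ᵥ x = 0 → x i = 0) : ∃ w, S *ᵥ w = Pi.single i 1 := by
  have hmem : (Pi.single i 1 : Fin n → ℝ) ∈ LinearMap.range S.mulVecLin := by
    rw [← Subspace.forall_mem_dualAnnihilator_apply_eq_zero_iff]
    intro φ hφ
    rw [Submodule.mem_dualAnnihilator] at hφ
    set v : Fin n → ℝ := fun j => φ (Pi.single j (1:ℝ)) with hvdef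
    have hrep : ∀ x : Fin n → ℝ, φ x = ∑ j, x j * v j := by
      intro x
      conv_lhs => rw [pi_eq_sum_univ x]
      rw [map_sum]
      refine Finset.sum_congr rfl fun j _ => ?_
      rw [_root_.map_smul, smul_eq_mul]
      congr 1
      rw [show (fun j_1 => if j = j_1 then (1:ℝ) else 0) = Pi.single j 1 from
        funext fun k => by simp [Pi.single_apply, eq_comm]]
    have hker : S *ᵥ v = 0 := by
      funext k
      have h1 : φ (S *ᵥ Pi.single k 1) = 0 :=
        hφ _ ⟨Pi.single k 1, by rw [mulVecLin_apply]⟩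
      rw [hrep] at h1
      simp only [mulVec_single_one, col_apply] at h1
      have h2 : (S *ᵥ v) k = ∑ j, S j k * v j := by
        simp only [mulVec, dotProduct]
        exact Finset.sum_congr rfl fun j _ => by rw [hS.apply k j]
      rw [h2, h1]
      rfl
    have hvi : v i = 0 := h v hker
    rw [hrep]
    simp only [Pi.single_apply]
    simpa using hvi
  obtain ⟨w, hw⟩ := hmem
  exact ⟨w, by rw [← mulVecLin_apply, hw]⟩

lemma cs {S : Matrix (Fin n) (Fin n) ℝ} (hS : S.PosSemidef) (w x : Fin n → ℝ) :
    (w ⬝ᵥ S *ᵥ x) ^ 2 ≤ (w ⬝ᵥ S *ᵥ w) * (x ⬝ᵥ S *ᵥ x) := by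
  open scoped MatrixOrder in
  obtain ⟨B, rfl⟩ := CStarAlgebra.nonneg_iff_eq_star_mul_self.mp hS.nonneg
  rw [star_eq_conjTranspose]
  have key : ∀ u t : Fin n → ℝ, u ⬝ᵥ (Bᴴ * B) *ᵥ t = ∑ k, (B *ᵥ u) k * (B *ᵥ t) k := by
    intro u t
    rw [← mulVec_mulVec, dotProduct_mulVec, conjTranspose_eq_transpose_of_trivial,
      vecMul_transpose]
    rfl
  rw [key, key, key]
  have := Finset.sum_mul_sq_le_sq_mul_sq Finset.univ (fun k => (B *ᵥ w) k) (fun k => (B *ᵥ x) k)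
  calc (∑ k, (B *ᵥ w) k * (B *ᵥ x) k) ^ 2
      ≤ (∑ k, (B *ᵥ w) k ^ 2) * ∑ k, (B *ᵥ x) k ^ 2 := this
    _ = (∑ k, (B *ᵥ w) k * (B *ᵥ w) k) * ∑ k, (B *ᵥ x) k * (B *ᵥ x) k := by
        simp only [sq]

lemma slack {S : Matrix (Fin n) (Fin n) ℝ} (hS : S.PosSemidef) (i : Fin n)
    (h : ∀ x, S *ᵥ x = 0 → x i = 0) :
    ∃ ε : ℝ, 0 < ε ∧ ∀ x : Fin n → ℝ, ε * x i ^ 2 ≤ x ⬝ᵥ S *ᵥ x := by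
  have hsymm : S.IsSymm := by
    have := hS.1
    rwa [Matrix.IsHermitian, conjTranspose_eq_transpose_of_trivial] at this
  obtain ⟨w, hw⟩ := exists_mulVec_single hsymm i h
  have hxi : ∀ x : Fin n → ℝ, w ⬝ᵥ S *ᵥ x = x i := by
    intro x
    rw [dotProduct_mulVec, ← hsymm, vecMul_transpose, hw, single_dotProduct, one_mul]
  set c : ℝ := w ⬝ᵥ S *ᵥ w with hc
  have hc0 : 0 ≤ c := dot_nonneg hS w
  have hcpos : 0 < c := by
    rcases hc0.lt_or_eq with h' | h'
    · exact h'
    · exfalso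
      have hz : S *ᵥ w = 0 := by
        have := (hS.dotProduct_mulVec_zero_iff w).mp (by simpa using h'.symm)
        simpa using this
      rw [hw] at hz
      have := congrFun hz i
      simp at this
  refine ⟨1 / c, by positivity, fun x => ?_⟩
  have hcs := cs hS w x
  rw [hxi x] at hcs
  rw [div_mul_eq_mul_div, one_mul, div_le_iff₀ hcpos]
  calc x i ^ 2 ≤ c * (x ⬝ᵥ S *ᵥ x) := hcs
    _ = x ⬝ᵥ S *ᵥ x * c := mul_comm _ _


variable {C : Matrix (Fin n) (Fin n) ℝ}

lemma herm (hC : C.IsSymm) (y : Fin n → ℝ) : (diagonal y - C).IsHermitian := by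
  show _ = _
  rw [conjTranspose_eq_transpose_of_trivial, transpose_sub, diagonal_transpose, hC]

lemma quad (C : Matrix (Fin n) (Fin n) ℝ) (y x : Fin n → ℝ) :
    x ⬝ᵥ (diagonal y - C) *ᵥ x = (∑ i, y i * x i ^ 2) - x ⬝ᵥ C *ᵥ x := by
  rw [sub_mulVec, dotProduct_sub]
  congr 1
  simp only [dotProduct, mulVec_diagonal]
  exact Finset.sum_congr rfl fun i _ => by ring

lemma Cbound (C : Matrix (Fin n) (Fin n) ℝ) (x : Fin n → ℝ) :
    x ⬝ᵥ C *ᵥ x ≤ (∑ i, ∑ j, |C i j|) * ∑ k, x k ^ 2 := by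
  have hrw : x ⬝ᵥ C *ᵥ x = ∑ i, ∑ j, x i * C i j * x j := by
    simp only [dotProduct, mulVec, Finset.mul_sum]
    exact Finset.sum_congr rfl fun i _ => Finset.sum_congr rfl fun j _ => by ring
  rw [hrw, Finset.sum_mul]
  refine Finset.sum_le_sum fun i _ => ?_
  rw [Finset.sum_mul]
  refine Finset.sum_le_sum fun j _ => ?_
  have hxi : x i ^ 2 ≤ ∑ k, x k ^ 2 :=
    Finset.single_le_sum (f := fun k => x k ^ 2) (fun k _ => sq_nonneg _) (Finset.mem_univ i)
  have hxj : x j ^ 2 ≤ ∑ k, x k ^ 2 :=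
    Finset.single_le_sum (f := fun k => x k ^ 2) (fun k _ => sq_nonneg _) (Finset.mem_univ j)
  calc x i * C i j * x j ≤ |x i * C i j * x j| := le_abs_self _
    _ = |C i j| * (|x i| * |x j|) := by rw [abs_mul, abs_mul]; ring
    _ ≤ |C i j| * ∑ k, x k ^ 2 := by
        refine mul_le_mul_of_nonneg_left ?_ (abs_nonneg _)
        nlinarith [sq_nonneg (|x i| - |x j|), sq_abs (x i), sq_abs (x j), abs_nonneg (x i),
          abs_nonneg (x j)]

/-- Existence of an optimal solution. -/
lemma exists_optimal (C : Matrix (Fin n) (Fin n) ℝ) (hC : C.IsSymm) :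
    ∃ y : Fin n → ℝ, (diagonal y - C).PosSemidef ∧
      ∀ y' : Fin n → ℝ, (diagonal y' - C).PosSemidef → ∑ i, y i ≤ ∑ i, y' i := by
  classical
  set t₀ : ℝ := ∑ i, ∑ j, |C i j| with ht₀
  have ht₀0 : 0 ≤ t₀ :=
    Finset.sum_nonneg fun i _ => Finset.sum_nonneg fun j _ => abs_nonneg _
  set y₀ : Fin n → ℝ := fun _ => t₀ with hy₀
  have hy₀feas : (diagonal y₀ - C).PosSemidef := by
    refine posSemidef_of_forall (herm hC y₀) fun x => ?_
    rw [quad]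
    have h1 : ∑ i, y₀ i * x i ^ 2 = t₀ * ∑ k, x k ^ 2 := by
      rw [Finset.mul_sum]
    rw [h1]
    linarith [Cbound C x]
  -- every feasible y has y i ≥ C i i ≥ -t₀
  have hlow : ∀ y : Fin n → ℝ, (diagonal y - C).PosSemidef → ∀ i, C i i ≤ y i := by
    intro y hy i
    have := dot_nonneg hy (Pi.single i 1)
    rw [quad] at this
    have h1 : ∑ k, y k * (Pi.single i 1 : Fin n → ℝ) k ^ 2 = y i := by
      simp [Pi.single_apply]
    have h2 : (Pi.single i 1 : Fin n → ℝ) ⬝ᵥ C *ᵥ (Pi.single i 1 : Fin n → ℝ) = C i i := by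
      rw [mulVec_single_one, single_dotProduct, one_mul, col_apply]
    rw [h1, h2] at this
    linarith
  have hCii : ∀ i, -t₀ ≤ C i i := by
    intro i
    have h1 : |C i i| ≤ t₀ := by
      rw [ht₀]
      calc |C i i| ≤ ∑ j, |C i j| :=
            Finset.single_le_sum (f := fun j => |C i j|) (fun j _ => abs_nonneg _)
              (Finset.mem_univ i)
        _ ≤ ∑ i, ∑ j, |C i j| :=
            Finset.single_le_sum (f := fun k => ∑ j, |C k j|) (fun k _ =>
              Finset.sum_nonneg fun j _ => abs_nonneg _) (Finset.mem_univ i)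
    linarith [neg_abs_le (C i i)]
  set K : Set (Fin n → ℝ) :=
    {y | (diagonal y - C).PosSemidef} ∩ {y | ∑ i, y i ≤ ∑ i, y₀ i} with hK
  have hKclosed : IsClosed K := by
    refine IsClosed.inter ?_ (isClosed_le (by fun_prop) continuous_const)
    have : {y : Fin n → ℝ | (diagonal y - C).PosSemidef} =
        ⋂ x : Fin n → ℝ, {y | 0 ≤ x ⬝ᵥ (diagonal y - C) *ᵥ x} := by
      ext y
      simp only [Set.mem_setOf_eq, Set.mem_iInter]
      exact ⟨fun hy x => dot_nonneg hy x, fun hy => posSemidef_of_forall (herm hC y) hy⟩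
    rw [this]
    refine isClosed_iInter fun x => ?_
    have : {y : Fin n → ℝ | 0 ≤ x ⬝ᵥ (diagonal y - C) *ᵥ x} =
        {y : Fin n → ℝ | 0 ≤ (∑ i, y i * x i ^ 2) - x ⬝ᵥ C *ᵥ x} := by
      ext y; rw [Set.mem_setOf_eq, Set.mem_setOf_eq, quad]
    rw [this]
    exact isClosed_le continuous_const (by fun_prop)
  have hKsub : K ⊆ Set.pi Set.univ fun _ : Fin n => Set.Icc (-t₀) (2 * n * t₀) := by
    rintro y ⟨hy1, hy2⟩ i _
    have hyl : ∀ j, -t₀ ≤ y j := fun j => le_trans (hCii j) (hlow y hy1 j)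
    constructor
    · exact hyl i
    · have hy2' : ∑ j, y j ≤ ∑ i, y₀ i := hy2
      have hsum : ∑ j, y j ≤ n * t₀ := by
        have : ∑ i, y₀ i = n * t₀ := by
          simp [hy₀, Finset.sum_const, Finset.card_univ]
        linarith
      have herase : y i + ∑ j ∈ Finset.univ.erase i, y j = ∑ j, y j :=
        Finset.add_sum_erase _ _ (Finset.mem_univ i)
      have hbelow : -(n * t₀) ≤ ∑ j ∈ Finset.univ.erase i, y j := by
        calc -(n * t₀) ≤ (Finset.univ.erase i).card • (-t₀) := by
              rw [nsmul_eq_mul, mul_neg, neg_le_neg_iff]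
              refine mul_le_mul_of_nonneg_right ?_ ht₀0
              have hcard : (Finset.univ.erase i).card ≤ n := by
                simpa using
                  Finset.card_erase_le (s := (Finset.univ : Finset (Fin n))) (a := i)
              exact_mod_cast hcard
          _ ≤ ∑ j ∈ Finset.univ.erase i, y j :=
              Finset.card_nsmul_le_sum _ _ _ fun j _ => hyl j
      nlinarith [herase, hsum, hbelow]
  have hKcompact : IsCompact K :=
    IsCompact.of_isClosed_subset (isCompact_univ_pi fun _ => isCompact_Icc) hKclosed hKsub
  have hy₀K : y₀ ∈ K := ⟨hy₀feas, show (∑ i, y₀ i) ≤ ∑ i, y₀ i from le_rfl⟩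
  obtain ⟨y, hyK, hymin⟩ :=
    hKcompact.exists_isMinOn ⟨y₀, hy₀K⟩ (Continuous.continuousOn (by fun_prop :
      Continuous fun y : Fin n → ℝ => ∑ i, y i))
  refine ⟨y, hyK.1, fun y' hy' => ?_⟩
  by_cases hle : ∑ i, y' i ≤ ∑ i, y₀ i
  · exact hymin ⟨hy', hle⟩
  · push_neg at hle
    exact le_trans (hymin hy₀K) hle.le

end MaxCutAux

open MaxCutAux

/-- The dual of the MaxCut SDP, `min { ⟨𝟙, y⟩ : Diag(y) − C ⪰ 0 }`, has a unique
optimal solution for every symmetric matrix `C`. -/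
theorem maxCut_dual_unique_optimal (n : ℕ) (C : Matrix (Fin n) (Fin n) ℝ)
    (hC : C.IsSymm) :
    ∃! y : Fin n → ℝ,
      (Matrix.diagonal y - C).PosSemidef ∧
        ∀ y' : Fin n → ℝ, (Matrix.diagonal y' - C).PosSemidef →
          (∑ i, y i) ≤ (∑ i, y' i) := by
  obtain ⟨y, hy, hopt⟩ := exists_optimal C hC
  refine ⟨y, ⟨hy, hopt⟩, ?_⟩
  rintro y' ⟨hy', hopt'⟩
  by_contra hne
  obtain ⟨i, hi⟩ : ∃ i, y' i ≠ y i := Function.ne_iff.mp hne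
  have hsum : ∑ i, y i = ∑ i, y' i := le_antisymm (hopt _ hy') (hopt' _ hy)
  set z : Fin n → ℝ := fun j => (y j + y' j) / 2 with hz
  have hzsum : ∑ j, z j = ∑ j, y j := by
    have h0 : ∑ j, z j = ((∑ j, y j) + ∑ j, y' j) / 2 := by
      rw [← Finset.sum_add_distrib, ← Finset.sum_div]
    rw [h0, ← hsum]
    ring
  have hzq : ∀ x : Fin n → ℝ, x ⬝ᵥ (diagonal z - C) *ᵥ x =
      (x ⬝ᵥ (diagonal y - C) *ᵥ x + x ⬝ᵥ (diagonal y' - C) *ᵥ x) / 2 := by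
    intro x
    rw [quad, quad, quad]
    have h0 : ∑ j, z j * x j ^ 2 = ((∑ j, y j * x j ^ 2) + ∑ j, y' j * x j ^ 2) / 2 := by
      rw [← Finset.sum_add_distrib, Finset.sum_div]
      refine Finset.sum_congr rfl fun j _ => ?_
      simp only [hz]
      ring
    rw [h0]
    ring
  have hzfeas : (diagonal z - C).PosSemidef := by
    refine posSemidef_of_forall (herm hC z) fun x => ?_
    rw [hzq x]
    have h1 := dot_nonneg hy x
    have h2 := dot_nonneg hy' x
    linarith
  have hzopt : ∀ y'' : Fin n → ℝ, (diagonal y'' - C).PosSemidef →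
      ∑ j, z j ≤ ∑ j, y'' j := by
    intro y'' h''
    rw [hzsum]
    exact hopt _ h''
  have hker : ¬ ∀ x : Fin n → ℝ, (diagonal z - C) *ᵥ x = 0 → x i = 0 := by
    intro hcontra
    obtain ⟨ε, hε, hbound⟩ := slack hzfeas i hcontra
    set z' : Fin n → ℝ := fun j => z j - (if j = i then ε else 0) with hz'
    have h2 : ∀ x : Fin n → ℝ, ∑ j, (if j = i then ε else 0) * x j ^ 2 = ε * x i ^ 2 := by
      intro x
      simp [ite_mul]
    have hz'feas : (diagonal z' - C).PosSemidef := by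
      refine posSemidef_of_forall (herm hC z') fun x => ?_
      rw [quad]
      have h1 : ∑ j, z' j * x j ^ 2 = (∑ j, z j * x j ^ 2) - ε * x i ^ 2 := by
        simp only [hz', sub_mul]
        rw [Finset.sum_sub_distrib, h2]
      have h4 : x ⬝ᵥ (diagonal z - C) *ᵥ x = (∑ j, z j * x j ^ 2) - x ⬝ᵥ C *ᵥ x := quad C z x
      have h5 := hbound x
      rw [h1]
      linarith
    have hcontr := hzopt z' hz'feas
    have h6 : ∑ j, z' j = (∑ j, z j) - ε := by
      simp only [hz']
      rw [Finset.sum_sub_distrib]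
      simp
    linarith
  push_neg at hker
  obtain ⟨x, hx0, hxi⟩ := hker
  have hq0 : x ⬝ᵥ (diagonal z - C) *ᵥ x = 0 := by rw [hx0, dotProduct_zero]
  rw [hzq x] at hq0
  have h1 := dot_nonneg hy x
  have h2 := dot_nonneg hy' x
  have hqy : x ⬝ᵥ (diagonal y - C) *ᵥ x = 0 := by linarith
  have hqy' : x ⬝ᵥ (diagonal y' - C) *ᵥ x = 0 := by linarith
  have hky : (diagonal y - C) *ᵥ x = 0 := by
    have := (hy.dotProduct_mulVec_zero_iff x).mp (by simpa using hqy)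
    simpa using this
  have hky' : (diagonal y' - C) *ᵥ x = 0 := by
    have := (hy'.dotProduct_mulVec_zero_iff x).mp (by simpa using hqy')
    simpa using this
  have e1 : y i * x i - (C *ᵥ x) i = 0 := by
    have := congrFun hky i
    simpa [sub_mulVec, mulVec_diagonal] using this
  have e2 : y' i * x i - (C *ᵥ x) i = 0 := by
    have := congrFun hky' i
    simpa [sub_mulVec, mulVec_diagonal] using this
  exact hi (mul_right_cancel₀ hxi (by linarith))
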